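/- Let H be a real symmetric invertible d×d matrix with exactly one negative eigenvalue -λ₁ (with unit eigenvector e₁), and L a real matrix with HL skew-symmetric. Let -μ be the unique negative eigenvalue of H + L, with unit real eigenvector v of H - Lᵀ (which is similar to H + L via H⁻¹(H - Lᵀ)H = H + L). Then μ ≥ λ₁. -/

import Mathlib

open Matrix

lemma stmt_8_aux {d : ℕ} (U W H : Matrix (Fin d) (Fin d) ℝ)
    (hUU : star U * U = 1) (hST : H = U * W * star U) (c : ℝ) :
    H + c • (H * H) = U * (W + c • (W * W)) * star U := by
  subst hST
  have hHH : U * W * star U * (U * W * star U) = U * (W * W) * star U := by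
    calc U * W * star U * (U * W * star U)
        = U * W * (star U * U) * W * star U := by simp only [Matrix.mul_assoc]
      _ = U * (W * W) * star U := by rw [hUU]; simp only [Matrix.mul_assoc, Matrix.one_mul, Matrix.mul_one]
  rw [hHH]
  rw [Matrix.mul_add, Matrix.add_mul]
  congr 1
  rw [← Matrix.smul_mul, ← Matrix.mul_smul]

theorem stmt_8 (d : ℕ) (H L : Matrix (Fin d) (Fin d) ℝ)
    (hH : H.IsHermitian) (hHinv : IsUnit H.det)
    (hHneg : (Finset.univ.filter (fun i => hH.eigenvalues i < 0)).card = 1)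
    (lam₁ : ℝ) (hlam₁ : 0 < lam₁)
    (e₁ : Fin d → ℝ) (he₁ : e₁ ⬝ᵥ e₁ = 1)
    (heig₁ : H.mulVec e₁ = (-lam₁) • e₁)
    (hHL : (H * L)ᵀ = -(H * L))
    (μ : ℝ) (hμ : 0 < μ)
    (v : Fin d → ℝ) (hv : v ⬝ᵥ v = 1)
    (heigv : (H - Lᵀ).mulVec v = (-μ) • v) :
    lam₁ ≤ μ := by
  classical
  -- basic symmetry facts
  have hHsymm : Hᵀ = H := by
    have := hH.eq
    ext i j
    have h1 : Hᴴ i j = H i j := by rw [this]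
    simpa [Matrix.conjTranspose_apply] using h1
  -- e₁ ≠ 0
  have he₁ne : e₁ ≠ 0 := by
    intro h
    rw [h] at he₁
    simp at he₁
  -- -lam₁ is an eigenvalue of H (in spectrum)
  have hmem : -lam₁ ∈ spectrum ℝ H := by
    rw [spectrum.mem_iff]
    intro hunit
    rw [Matrix.isUnit_iff_isUnit_det, isUnit_iff_ne_zero] at hunit
    apply hunit
    rw [← Matrix.exists_mulVec_eq_zero_iff]
    refine ⟨e₁, he₁ne, ?_⟩
    have : (algebraMap ℝ (Matrix (Fin d) (Fin d) ℝ)) (-lam₁) = (-lam₁) • (1 : Matrix (Fin d) (Fin d) ℝ) := by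
      rw [Algebra.algebraMap_eq_smul_one]
    rw [this, Matrix.sub_mulVec, Matrix.smul_mulVec, Matrix.one_mulVec, heig₁]
    simp
  -- so some eigenvalue equals -lam₁
  obtain ⟨k, hk⟩ : ∃ k, hH.eigenvalues k = -lam₁ := by
    have := hH.spectrum_real_eq_range_eigenvalues ▸ hmem
    exact this
  -- all negative eigenvalues equal -lam₁
  have hneg_eq : ∀ i, hH.eigenvalues i < 0 → hH.eigenvalues i = -lam₁ := by
    obtain ⟨a, ha⟩ := Finset.card_eq_one.mp hHneg
    intro i hi
    have hik : i = a := by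
      have : i ∈ Finset.univ.filter (fun i => hH.eigenvalues i < 0) := by
        simp [hi]
      rw [ha] at this; simpa using this
    have hka : k = a := by
      have : k ∈ Finset.univ.filter (fun i => hH.eigenvalues i < 0) := by
        simp [hk]; linarith
      rw [ha] at this; simpa using this
    rw [hik, ← hka, hk]
  -- key nonnegativity
  have hg : ∀ i, 0 ≤ hH.eigenvalues i + lam₁⁻¹ * (hH.eigenvalues i) ^ 2 := by
    intro i
    rcases lt_or_ge (hH.eigenvalues i) 0 with h | h
    · rw [hneg_eq i h]
      have h2 : lam₁⁻¹ * (-lam₁) ^ 2 = lam₁ := by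
        field_simp
      rw [h2]
      linarith
    · have : 0 ≤ lam₁⁻¹ * (hH.eigenvalues i) ^ 2 := by positivity
      linarith
  -- the matrix M = H + lam₁⁻¹ • H*H is PSD
  set U : Matrix (Fin d) (Fin d) ℝ := (hH.eigenvectorUnitary : Matrix (Fin d) (Fin d) ℝ) with hU
  have hUU : star U * U = 1 := mem_unitaryGroup_iff'.mp hH.eigenvectorUnitary.2
  have hDev : (Matrix.diagonal (RCLike.ofReal ∘ hH.eigenvalues) : Matrix (Fin d) (Fin d) ℝ)
      = Matrix.diagonal hH.eigenvalues := by
    congr 1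
  have hST : H = U * Matrix.diagonal hH.eigenvalues * star U := by
    have := hH.spectral_theorem
    rwa [hDev] at this
  set M : Matrix (Fin d) (Fin d) ℝ := H + lam₁⁻¹ • (H * H) with hM
  have hMdecomp : M = U * Matrix.diagonal (fun i => hH.eigenvalues i + lam₁⁻¹ * (hH.eigenvalues i) ^ 2) * star U := by
    rw [hM, stmt_8_aux U (Matrix.diagonal hH.eigenvalues) H hUU hST lam₁⁻¹]
    congr 2
    rw [Matrix.diagonal_mul_diagonal]
    ext i j
    rcases eq_or_ne i j with rfl | hne
    · simp only [Matrix.add_apply, Matrix.smul_apply, Matrix.diagonal_apply_eq, smul_eq_mul]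
      ring
    · simp [Matrix.diagonal_apply_ne _ hne]
  have hMpsd : M.PosSemidef := by
    rw [hMdecomp]
    exact (Matrix.posSemidef_diagonal_iff.mpr hg).mul_mul_conjTranspose_same U
  -- set u = H⁻¹ v
  set u : Fin d → ℝ := H⁻¹ *ᵥ v with hu
  have hHu : H *ᵥ u = v := by
    rw [hu, Matrix.mulVec_mulVec, Matrix.mul_nonsing_inv H hHinv, Matrix.one_mulVec]
  -- u ⬝ᵥ H *ᵥ v = 1
  have h1 : u ⬝ᵥ (H *ᵥ v) = 1 := by
    rw [Matrix.dotProduct_mulVec, ← Matrix.mulVec_transpose, hHsymm, hHu, hv]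
  -- skew part vanishes: u ⬝ᵥ Lᵀ *ᵥ v = 0
  have hLH : Lᵀ * H = -(H * L) := by
    calc Lᵀ * H = Lᵀ * Hᵀ := by rw [hHsymm]
      _ = (H * L)ᵀ := by rw [Matrix.transpose_mul]
      _ = -(H * L) := hHL
  have hskew : u ⬝ᵥ ((H * L) *ᵥ u) = 0 := by
    have h2 : u ⬝ᵥ ((H * L) *ᵥ u) = -(u ⬝ᵥ ((H * L) *ᵥ u)) := by
      conv_lhs => rw [Matrix.dotProduct_mulVec, ← Matrix.mulVec_transpose, hHL,
        Matrix.neg_mulVec]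
      rw [neg_dotProduct, dotProduct_comm]
    linarith
  have h2 : u ⬝ᵥ (Lᵀ *ᵥ v) = 0 := by
    rw [← hHu, Matrix.mulVec_mulVec, hLH, Matrix.neg_mulVec, dotProduct_neg, hskew, neg_zero]
  -- u ⬝ᵥ v = -μ⁻¹
  have huv : u ⬝ᵥ v = -μ⁻¹ := by
    have := congrArg (fun w => u ⬝ᵥ w) heigv
    simp only [Matrix.sub_mulVec, dotProduct_sub, dotProduct_smul, smul_eq_mul] at this
    rw [h1, h2, sub_zero] at this
    have hμne : μ ≠ 0 := ne_of_gt hμ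
    field_simp at this ⊢
    linarith [this]
  -- final inequality from PSD quadratic form at u
  have hquad := hMpsd.dotProduct_mulVec_nonneg u
  have hstar : (star u : Fin d → ℝ) = u := by simp
  rw [hstar] at hquad
  have hMu : u ⬝ᵥ (M *ᵥ u) = -μ⁻¹ + lam₁⁻¹ := by
    have e1 : M *ᵥ u = H *ᵥ u + lam₁⁻¹ • ((H * H) *ᵥ u) := by
      rw [hM, Matrix.add_mulVec, Matrix.smul_mulVec]
    have e2 : (H * H) *ᵥ u = H *ᵥ v := by rw [← Matrix.mulVec_mulVec, hHu]
    rw [e1, e2, dotProduct_add, dotProduct_smul, hHu, huv, h1]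
    simp
  rw [hMu] at hquad
  have hinv : μ⁻¹ ≤ lam₁⁻¹ := by linarith
  exact (inv_le_inv₀ hμ hlam₁).mp hinv
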